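/- Let L = G ∔ I be a semisimple Leibniz algebra with [I,G] = I and [G,I] = 0. If φ is a Leibniz 2-cocycle of L with values in L of degree 0 mapping G ⊗ I → I (i.e., φ vanishes on G⊗G, I⊗G, I⊗I), then φ = 0. -/

import Mathlib

/-- For a semisimple Leibniz algebra `L = G ∔ I` with `[I,G] = I` and `[G,I] = 0`,
every degree-`0` Leibniz 2-cocycle supported on `G ⊗ I` with values in `I`
(i.e. vanishing on `G⊗G`, `I⊗G` and `I⊗I`) is zero: `Φ⁰_{G,I} = 0`. -/
theorem stmt9 {F L : Type*} [Field F] [AddCommGroup L] [Module F L]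
    (br : L →ₗ[F] L →ₗ[F] L)
    (leib : ∀ x y z : L, br x (br y z) = br (br x y) z - br (br x z) y)
    (G I : Submodule F L) (hcompl : IsCompl G I)
    (hGG : ∀ a ∈ G, ∀ b ∈ G, br a b ∈ G)
    -- `[I,G] = I`
    (hIG : Submodule.span F {u : L | ∃ a ∈ I, ∃ b ∈ G, u = br a b} = I)
    -- `[G,I] = 0`
    (hGI : ∀ a ∈ G, ∀ b ∈ I, br a b = 0)
    -- `[I,I] = 0`
    (hII : ∀ a ∈ I, ∀ b ∈ I, br a b = 0)
    (φ : L →ₗ[F] L →ₗ[F] L)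
    (hcoc : ∀ x y z : L,
      br x (φ y z) - br (φ x y) z + br (φ x z) y +
        φ x (br y z) - φ (br x y) z + φ (br x z) y = 0)
    -- `φ` is supported on `G ⊗ I`…
    (hsupp₁ : ∀ a ∈ G, ∀ b ∈ G, φ a b = 0)
    (hsupp₂ : ∀ a ∈ I, ∀ b : L, φ a b = 0)
    -- …with values in `I`
    (hval : ∀ a ∈ G, ∀ b ∈ I, φ a b ∈ I) :
    φ = 0 := by
  -- Step 1: from the cocycle identity on (g, h, i) ∈ G × G × I:
  -- br (φ g i) h = φ (br g h) i
  have key1 : ∀ g ∈ G, ∀ i ∈ I, ∀ h ∈ G, br (φ g i) h = φ (br g h) i := by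
    intro g hg i hi h hh
    have H := hcoc g h i
    rw [hGI g hg (φ h i) (hval h hh i hi), hsupp₁ g hg h hh,
        hGI h hh i hi] at H
    simp only [map_zero, LinearMap.zero_apply, hGI g hg i hi] at H
    simpa [sub_eq_zero] using H
  -- Step 2: cocycle identity on (g, a, b) ∈ G × I × G gives φ g (br a b) = 0
  have key2 : ∀ g ∈ G, ∀ a ∈ I, ∀ b ∈ G, φ g (br a b) = 0 := by
    intro g hg a ha b hb
    have H := hcoc g a b
    rw [hsupp₂ a ha b, hsupp₁ g hg b hb, key1 g hg a ha b hb,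
        hGI g hg a ha] at H
    simp only [map_zero, LinearMap.zero_apply] at H
    abel_nf at H
    simpa using H
  -- Step 3: φ g i = 0 for g ∈ G, i ∈ I
  have key3 : ∀ g ∈ G, ∀ i ∈ I, φ g i = 0 := by
    intro g hg i hi
    rw [← hIG] at hi
    induction hi using Submodule.span_induction with
    | mem u hu =>
      obtain ⟨a, ha, b, hb, rfl⟩ := hu
      exact key2 g hg a ha b hb
    | zero => simp
    | add u v _ _ hu hv => rw [map_add, hu, hv, add_zero]
    | smul c u _ hu => rw [map_smul, hu, smul_zero]
  -- Conclusion
  ext x y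
  obtain ⟨xg, xi, hxg, hxi, rfl⟩ := Submodule.codisjoint_iff_exists_add_eq.mp hcompl.codisjoint x
  obtain ⟨yg, yi, hyg, hyi, rfl⟩ := Submodule.codisjoint_iff_exists_add_eq.mp hcompl.codisjoint y
  simp only [map_add, LinearMap.add_apply, hsupp₁ xg hxg yg hyg,
    key3 xg hxg yi hyi, hsupp₂ xi hxi, LinearMap.zero_apply]
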